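/- arXiv:1602.05478 — 2 statements merged into one kernel-verified Lean document; each statement's English description precedes it below -/
import Mathlib

section
/- Let Q be a lower transition rate operator on a finite nonempty set 𝒳, and let (T_t)_{t≥0} be the associated family of operators determined by the differential equation d/dt T_t f = Q(T_t f) with T_0 f = f. Then for any t > 0, Q is ergodic (i.e. for all f ∈ 𝓛(𝒳), lim_{s→∞} T_s f exists and is a constant function) if and only if the single operator T_t is ergodic as a lower transition operator (i.e. for all f ∈ 𝓛(𝒳), lim_{n→∞} (T_t)^n f exists and is a constant function). -/
open Filter Topology

/-- The minimum of a real-valued function on a finite nonempty type. -/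
noncomputable def minf {X : Type*} [Fintype X] [Nonempty X] (f : X → ℝ) : ℝ :=
  Finset.univ.inf' Finset.univ_nonempty f

/-- The maximum of a real-valued function on a finite nonempty type. -/
noncomputable def maxf {X : Type*} [Fintype X] [Nonempty X] (f : X → ℝ) : ℝ :=
  Finset.univ.sup' Finset.univ_nonempty f

/-- The (real-valued) indicator function of a set. -/
noncomputable def ind {X : Type*} (A : Set X) : X → ℝ := A.indicator 1

/-- The conjugate (upper) operator `f ↦ -(Q (-f))`. -/
def conjOp {X : Type*} (Q : (X → ℝ) → (X → ℝ)) : (X → ℝ) → (X → ℝ) :=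
  fun f => -(Q (-f))

/-- A lower transition rate operator. -/
def IsLTRO {X : Type*} [Fintype X] (Q : (X → ℝ) → (X → ℝ)) : Prop :=
  (∀ μ : ℝ, Q (fun _ => μ) = 0) ∧
  (∀ f g : X → ℝ, Q f + Q g ≤ Q (f + g)) ∧
  (∀ l : ℝ, 0 ≤ l → ∀ f : X → ℝ, Q (l • f) = l • Q f) ∧
  (∀ x y : X, x ≠ y → 0 ≤ Q (ind {y}) x)

/-- A lower transition operator. -/
def IsLTO {X : Type*} [Fintype X] [Nonempty X] (T : (X → ℝ) → (X → ℝ)) : Prop :=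
  (∀ f : X → ℝ, ∀ x : X, minf f ≤ T f x) ∧
  (∀ f g : X → ℝ, T f + T g ≤ T (f + g)) ∧
  (∀ l : ℝ, 0 ≤ l → ∀ f : X → ℝ, T (l • f) = l • T f)

/-- `T` is the family of operators solving `d/dt T_t f = Q (T_t f)` on `[0,∞)`
with `T_0 f = f`. -/
def IsSol {X : Type*} [Fintype X] (Q : (X → ℝ) → (X → ℝ))
    (T : ℝ → (X → ℝ) → (X → ℝ)) : Prop :=
  (∀ f : X → ℝ, T 0 f = f) ∧
  (∀ f : X → ℝ, ∀ t : ℝ, 0 ≤ t →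
    HasDerivWithinAt (fun s => T s f) (Q (T t f)) (Set.Ici 0) t)

/-- Ergodicity of a lower transition rate operator, expressed via its
associated time-dependent family `T`. -/
def ErgodicQ {X : Type*} [Fintype X] (T : ℝ → (X → ℝ) → (X → ℝ)) : Prop :=
  ∀ f : X → ℝ, ∃ c : ℝ, Tendsto (fun t => T t f) atTop (𝓝 (fun _ : X => c))

/-- Ergodicity of a lower transition operator. -/
def ErgodicT {X : Type*} [Fintype X] (T : (X → ℝ) → (X → ℝ)) : Prop :=
  ∀ f : X → ℝ, ∃ c : ℝ, Tendsto (fun n : ℕ => T^[n] f) atTop (𝓝 (fun _ : X => c))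

/-- `x` is upper reachable from `y` (w.r.t. the lower transition rate operator `Q`). -/
def upperReach {X : Type*} [Fintype X] (Q : (X → ℝ) → (X → ℝ)) (y x : X) : Prop :=
  ∃ (n : ℕ) (p : ℕ → X), p 0 = y ∧ p n = x ∧
    ∀ k : ℕ, k < n → p (k + 1) ≠ p k ∧ 0 < conjOp Q (ind {p (k + 1)}) (p k)

/-- One step of the lower-reachability construction: `A ↦ A ∪ {y ∉ A : Q(𝟙_A)(y) > 0}`. -/
def lowerStep {X : Type*} [Fintype X] (Q : (X → ℝ) → (X → ℝ)) (A : Set X) : Set X :=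
  A ∪ {y : X | y ∉ A ∧ 0 < Q (ind A) y}

/-- `A` is lower reachable from `x`: `x ∈ Aₙ` where `n` is the first index with
`Aₙ = Aₙ₊₁` (equivalently, any such index, since the sequence is determined by
recursion and increasing). -/
def lowerReach {X : Type*} [Fintype X] (Q : (X → ℝ) → (X → ℝ)) (x : X) (A : Set X) : Prop :=
  ∃ n : ℕ, (lowerStep Q)^[n] A = (lowerStep Q)^[n + 1] A ∧ x ∈ (lowerStep Q)^[n] A

/-- The set `𝒳_RA := {x : ∃ n ≥ 1, min T̄ⁿ 𝟙ₓ > 0}`. -/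
noncomputable def XRA {X : Type*} [Fintype X] [Nonempty X]
    (T : (X → ℝ) → (X → ℝ)) : Set X :=
  {x : X | ∃ n : ℕ, 0 < minf ((conjOp T)^[n + 1] (ind {x}))}

/-- A regularly absorbing lower transition operator. -/
def RegAbs {X : Type*} [Fintype X] [Nonempty X] (T : (X → ℝ) → (X → ℝ)) : Prop :=
  (XRA T).Nonempty ∧ ∀ x : X, x ∉ XRA T → ∃ n : ℕ, 0 < T^[n + 1] (ind (XRA T)) x

/-- The set `𝒳_1A := {x : min T̄ 𝟙ₓ > 0}`. -/
noncomputable def X1A {X : Type*} [Fintype X] [Nonempty X]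
    (T : (X → ℝ) → (X → ℝ)) : Set X :=
  {x : X | 0 < minf (conjOp T (ind {x}))}

/-- A 1-step absorbing lower transition operator. -/
def OneStepAbs {X : Type*} [Fintype X] [Nonempty X] (T : (X → ℝ) → (X → ℝ)) : Prop :=
  (X1A T).Nonempty ∧ ∀ x : X, x ∉ X1A T → 0 < T (ind (X1A T)) x

/-- The operator (sup) norm of a non-negatively homogeneous operator. -/
noncomputable def opN {X : Type*} [Fintype X] (Q : (X → ℝ) → (X → ℝ)) : ℝ :=
  sSup {r : ℝ | ∃ f : X → ℝ, ‖f‖ = 1 ∧ r = ‖Q f‖}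

section helpers
variable {X : Type*} [Fintype X] {Q : (X → ℝ) → (X → ℝ)}

lemma q_zero (hQ : IsLTRO Q) : Q 0 = 0 := by
  have := hQ.1 0
  exact this

lemma q_sum (hQ : IsLTRO Q) {ι : Type*} (s : Finset ι) (F : ι → X → ℝ) :
    (∑ i ∈ s, Q (F i)) ≤ Q (∑ i ∈ s, F i) := by
  classical
  induction s using Finset.induction with
  | empty => simp [q_zero hQ]
  | insert _ _ h ih =>
    rw [Finset.sum_insert h, Finset.sum_insert h]
    calc Q (F _) + ∑ i ∈ _, Q (F i) ≤ Q (F _) + Q (∑ i ∈ _, F i) := by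
          exact add_le_add le_rfl ih
      _ ≤ _ := hQ.2.1 _ _

lemma q_lower (hQ : IsLTRO Q) (h : X → ℝ) (x : X) :
    -((∑ y : X, (‖Q (ind {y})‖ + ‖Q (-ind {y})‖)) * ‖h‖) ≤ Q h x := by
  classical
  have hrep : h = ∑ y : X, h y • ind {y} := by
    funext z
    simp only [Finset.sum_apply, Pi.smul_apply, ind, Set.indicator, Set.mem_singleton_iff]
    rw [Finset.sum_eq_single z] <;> simp +contextual [eq_comm]
  have hterm : ∀ y : X, -((‖Q (ind {y})‖ + ‖Q (-ind {y})‖) * ‖h‖) ≤ Q (h y • ind {y}) x := by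
    intro y
    have hy : |h y| ≤ ‖h‖ := by
      simpa using norm_le_pi_norm h y
    rcases le_or_gt 0 (h y) with hpos | hneg
    · rw [hQ.2.2.1 _ hpos]
      have h1 : |Q (ind {y}) x| ≤ ‖Q (ind {y})‖ := by simpa using norm_le_pi_norm (Q (ind {y})) x
      have : -(‖Q (ind {y})‖ * ‖h‖) ≤ h y * Q (ind {y}) x := by
        nlinarith [abs_nonneg (h y), neg_abs_le (Q (ind {y}) x), abs_le.1 hy, norm_nonneg h,
          norm_nonneg (Q (ind {y}))]
      have h2 : (0:ℝ) ≤ ‖Q (-ind {y})‖ * ‖h‖ := by positivity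
      simp only [Pi.smul_apply, smul_eq_mul]
      nlinarith
    · have : h y • ind {y} = (-h y) • (-ind {y}) := by
        funext z; simp [neg_mul_neg]
      rw [this, hQ.2.2.1 _ (by linarith)]
      have h1 : |Q (-ind {y}) x| ≤ ‖Q (-ind {y})‖ := by simpa using norm_le_pi_norm (Q (-ind {y})) x
      have habs : |h y| ≤ ‖h‖ := hy
      have h2 : (0:ℝ) ≤ ‖Q (ind {y})‖ * ‖h‖ := by positivity
      simp only [Pi.smul_apply, smul_eq_mul]
      nlinarith [abs_le.1 habs, abs_le.1 h1, norm_nonneg h]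
  calc -((∑ y : X, (‖Q (ind {y})‖ + ‖Q (-ind {y})‖)) * ‖h‖)
      = ∑ y : X, -((‖Q (ind {y})‖ + ‖Q (-ind {y})‖) * ‖h‖) := by
        rw [Finset.sum_mul, ← Finset.sum_neg_distrib]
    _ ≤ ∑ y : X, Q (h y • ind {y}) x := Finset.sum_le_sum fun y _ => hterm y
    _ = (∑ y : X, Q (h y • ind {y})) x := by simp
    _ ≤ Q (∑ y : X, h y • ind {y}) x := q_sum hQ _ _ x
    _ = Q h x := by rw [← hrep]

lemma q_lip (hQ : IsLTRO Q) :
    ∃ C : ℝ, 0 ≤ C ∧ ∀ f g : X → ℝ, ‖Q f - Q g‖ ≤ C * ‖f - g‖ := by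
  classical
  refine ⟨∑ y : X, (‖Q (ind {y})‖ + ‖Q (-ind {y})‖), ?_, ?_⟩
  · exact Finset.sum_nonneg fun y _ => by positivity
  · intro f g
    set C := ∑ y : X, (‖Q (ind {y})‖ + ‖Q (-ind {y})‖) with hC
    have hCnn : 0 ≤ C := Finset.sum_nonneg fun y _ => by positivity
    have key : ∀ u v : X → ℝ, ∀ x : X, -(C * ‖u - v‖) ≤ Q u x - Q v x := by
      intro u v x
      have h1 : Q (u - v) + Q v ≤ Q (u - v + v) := hQ.2.1 _ _
      have h2 : u - v + v = u := by ring
      rw [h2] at h1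
      have := h1 x
      have h3 := q_lower hQ (u - v) x
      simp only [Pi.add_apply] at this
      linarith
    rw [show C * ‖f - g‖ = max (C * ‖f - g‖) 0 from (max_eq_left (by positivity)).symm]
    refine (pi_norm_le_iff_of_nonneg (by positivity)).2 fun x => ?_
    rw [max_eq_left (by positivity)]
    have h1 := key f g x
    have h2 := key g f x
    rw [show g - f = -(f - g) by ring, norm_neg] at h2
    simp only [Pi.sub_apply]
    rw [Real.norm_eq_abs, abs_le]
    constructor <;> linarith

end helpers
section part2
variable {X : Type*} [Fintype X] {Q : (X → ℝ) → (X → ℝ)} {C : ℝ}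

lemma gron_key (hC : ∀ f g : X → ℝ, ‖Q f - Q g‖ ≤ C * ‖f - g‖)
    {g h : ℝ → X → ℝ}
    (hg : ∀ s : ℝ, 0 ≤ s → HasDerivWithinAt g (Q (g s)) (Set.Ici 0) s)
    (hh : ∀ s : ℝ, 0 ≤ s → HasDerivWithinAt h (Q (h s)) (Set.Ici 0) s)
    {s : ℝ} (hs : 0 ≤ s) :
    ‖g s - h s‖ ≤ ‖g 0 - h 0‖ * Real.exp (C * s) := by
  have hcont : ContinuousOn (fun r => g r - h r) (Set.Icc 0 s) := fun r hr =>
    (((hg r hr.1).sub (hh r hr.1)).continuousWithinAt).mono (fun z hz => hz.1)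
  have hder : ∀ r ∈ Set.Ico (0:ℝ) s,
      HasDerivWithinAt (fun r => g r - h r) (Q (g r) - Q (h r)) (Set.Ici r) r :=
    fun r hr => ((hg r hr.1).sub (hh r hr.1)).mono (Set.Ici_subset_Ici.2 hr.1)
  have := norm_le_gronwallBound_of_norm_deriv_right_le (ε := 0) hcont hder le_rfl
    (fun r hr => by simpa using hC (g r) (h r)) s (Set.right_mem_Icc.2 hs)
  simpa [gronwallBound_ε0] using this

lemma sol_unique (hC : ∀ f g : X → ℝ, ‖Q f - Q g‖ ≤ C * ‖f - g‖)
    {g h : ℝ → X → ℝ}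
    (hg : ∀ s : ℝ, 0 ≤ s → HasDerivWithinAt g (Q (g s)) (Set.Ici 0) s)
    (hh : ∀ s : ℝ, 0 ≤ s → HasDerivWithinAt h (Q (h s)) (Set.Ici 0) s)
    (h0 : g 0 = h 0) {s : ℝ} (hs : 0 ≤ s) : g s = h s := by
  have := gron_key hC hg hh hs
  rw [h0, sub_self, norm_zero, zero_mul] at this
  have := norm_le_zero_iff.1 (le_antisymm this (norm_nonneg _)).le
  exact sub_eq_zero.1 this

variable {T : ℝ → (X → ℝ) → (X → ℝ)}

lemma shift_deriv (hT : IsSol Q T) (f : X → ℝ) {u : ℝ} (hu : 0 ≤ u) :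
    ∀ s : ℝ, 0 ≤ s → HasDerivWithinAt (fun r => T (u + r) f) (Q (T (u + s) f)) (Set.Ici 0) s := by
  intro s hs
  have h1 := hT.2 f (u + s) (by linarith)
  have h2 : HasDerivWithinAt (fun r : ℝ => u + r) 1 (Set.Ici 0) s := by
    simpa using (hasDerivWithinAt_id s (Set.Ici 0)).const_add u
  have hmaps : Set.MapsTo (fun r : ℝ => u + r) (Set.Ici 0) (Set.Ici 0) :=
    fun r hr => add_nonneg hu hr
  have := HasDerivWithinAt.scomp s h1 h2 hmaps
  simpa [Function.comp_def] using this

lemma semigroup (hC : ∀ f g : X → ℝ, ‖Q f - Q g‖ ≤ C * ‖f - g‖)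
    (hT : IsSol Q T) (f : X → ℝ) {u s : ℝ} (hu : 0 ≤ u) (hs : 0 ≤ s) :
    T (u + s) f = T s (T u f) := by
  exact sol_unique hC (shift_deriv hT f hu)
    (fun r hr => hT.2 (T u f) r hr)
    (by simp [hT.1]) hs

lemma iterate_eq (hC : ∀ f g : X → ℝ, ‖Q f - Q g‖ ≤ C * ‖f - g‖)
    (hT : IsSol Q T) (f : X → ℝ) {t : ℝ} (ht : 0 ≤ t) (n : ℕ) :
    T ((n : ℝ) * t) f = (T t)^[n] f := by
  induction n generalizing f with
  | zero => simpa using hT.1 f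
  | succ n ih =>
    rw [Function.iterate_succ_apply, ← ih (T t f)]
    rw [← semigroup hC hT f ht (by positivity)]
    congr 1
    push_cast
    ring

lemma const_fixed (hQ : IsLTRO Q) (hC : ∀ f g : X → ℝ, ‖Q f - Q g‖ ≤ C * ‖f - g‖)
    (hT : IsSol Q T) (c : ℝ) {s : ℝ} (hs : 0 ≤ s) :
    T s (fun _ => c) = fun _ => c := by
  have hh : ∀ r : ℝ, 0 ≤ r → HasDerivWithinAt (fun _ : ℝ => (fun _ : X => c))
      (Q ((fun _ : ℝ => (fun _ : X => c)) r)) (Set.Ici 0) r := by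
    intro r hr
    rw [show Q ((fun _ : ℝ => (fun _ : X => c)) r) = 0 from hQ.1 c]
    exact hasDerivWithinAt_const r _ _
  exact sol_unique hC (fun r hr => hT.2 _ r hr) hh (hT.1 _) hs

end part2

/-- For any `t > 0`, `Q` is ergodic iff the single lower transition operator
`T_t` is ergodic in the discrete-time sense. -/
theorem stmt1 {X : Type*} [Fintype X] [Nonempty X]
    (Q : (X → ℝ) → (X → ℝ)) (hQ : IsLTRO Q)
    (T : ℝ → (X → ℝ) → (X → ℝ)) (hT : IsSol Q T)
    (t : ℝ) (ht : 0 < t) :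
    ErgodicQ T ↔ ErgodicT (T t) := by
  obtain ⟨C, hC0, hC⟩ := q_lip hQ
  constructor
  · intro hE f
    obtain ⟨c, hc⟩ := hE f
    refine ⟨c, ?_⟩
    have hmul : Tendsto (fun n : ℕ => (n : ℝ) * t) atTop atTop :=
      Tendsto.atTop_mul_const ht tendsto_natCast_atTop_atTop
    have h2 := hc.comp hmul
    have heq : (fun n : ℕ => (T t)^[n] f) = ((fun u => T u f) ∘ fun n : ℕ => (n : ℝ) * t) := by
      funext n
      exact (iterate_eq hC hT f ht.le n).symm
    rw [heq]
    exact h2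
  · intro hE f
    obtain ⟨c, hc⟩ := hE f
    refine ⟨c, ?_⟩
    rw [tendsto_iff_norm_sub_tendsto_zero]
    have hcn : Tendsto (fun n : ℕ => ‖(T t)^[n] f - fun _ : X => c‖) atTop (𝓝 0) :=
      tendsto_iff_norm_sub_tendsto_zero.1 hc
    have hfloor : Tendsto (fun s : ℝ => ⌊s / t⌋₊) atTop atTop :=
      tendsto_nat_floor_atTop.comp (tendsto_id.atTop_div_const ht)
    have hupper : Tendsto (fun s : ℝ =>
        Real.exp (C * t) * ‖(T t)^[⌊s / t⌋₊] f - fun _ : X => c‖) atTop (𝓝 0) := by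
      have := (hcn.comp hfloor).const_mul (Real.exp (C * t))
      simpa using this
    refine tendsto_of_tendsto_of_tendsto_of_le_of_le' tendsto_const_nhds hupper
      (Eventually.of_forall fun s => norm_nonneg _) ?_
    filter_upwards [eventually_ge_atTop (0 : ℝ)] with s hs
    set n := ⌊s / t⌋₊ with hn
    have h1 : (n : ℝ) * t ≤ s := by
      have h := Nat.floor_le (div_nonneg hs ht.le)
      calc (n : ℝ) * t ≤ (s / t) * t := mul_le_mul_of_nonneg_right h ht.le
        _ = s := by field_simp
    have h2 : s - (n : ℝ) * t ≤ t := by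
      have h := Nat.lt_floor_add_one (s / t)
      have := (div_lt_iff₀ ht).1 h
      nlinarith
    set r := s - (n : ℝ) * t with hr
    have hr0 : 0 ≤ r := by linarith
    have hsplit : T s f = T r ((T t)^[n] f) := by
      rw [← iterate_eq hC hT f ht.le n,
        ← semigroup hC hT f (by positivity : (0:ℝ) ≤ (n : ℝ) * t) hr0]
      congr 1
      simp [hr]
    have hconst : T r (fun _ : X => c) = fun _ : X => c := const_fixed hQ hC hT c hr0
    have hb := gron_key hC (g := fun a => T a ((T t)^[n] f)) (h := fun a => T a (fun _ : X => c))
      (fun a ha => hT.2 _ a ha) (fun a ha => hT.2 _ a ha) hr0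
    rw [hT.1 ((T t)^[n] f), hT.1 (fun _ : X => c)] at hb
    have hexp : Real.exp (C * r) ≤ Real.exp (C * t) :=
      Real.exp_le_exp.2 (mul_le_mul_of_nonneg_left h2 hC0)
    calc ‖T s f - fun _ : X => c‖ = ‖T r ((T t)^[n] f) - T r (fun _ : X => c)‖ := by
          rw [hsplit, hconst]
      _ ≤ ‖(T t)^[n] f - fun _ : X => c‖ * Real.exp (C * r) := hb
      _ ≤ Real.exp (C * t) * ‖(T t)^[n] f - fun _ : X => c‖ := by
          rw [mul_comm]
          exact mul_le_mul_of_nonneg_right hexp (norm_nonneg _)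
end

section
/- Let Q be a lower transition rate operator on a finite nonempty set 𝒳, and let (T_t)_{t≥0} be the associated family of operators determined by the differential equation d/dt T_t f = Q(T_t f) with T_0 f = f. Then for any t > 0, any x ∈ 𝒳 and any A ⊆ 𝒳: T_t 𝟙_A(x) > 0 if and only if A is lower reachable from x, i.e. if and only if x ∈ A_n, where A_0 := A, A_{k+1} := A_k ∪ {y ∈ 𝒳 \ A_k : Q(𝟙_{A_k})(y) > 0}, and n is the first index with A_n = A_{n+1}. -/
open Filter Topology

section Aux
open Set Classical

section basics
variable {X : Type*} [Fintype X] {Q : (X → ℝ) → (X → ℝ)} (hQ : IsLTRO Q)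

lemma ind_apply {A : Set X} (z : X) : ind A z = if z ∈ A then 1 else 0 := by
  classical
  simp [ind, Set.indicator_apply]

lemma ind_nonneg {A : Set X} (z : X) : 0 ≤ ind A z := by
  rw [ind_apply]; split <;> norm_num

lemma ind_le_one {A : Set X} (z : X) : ind A z ≤ 1 := by
  rw [ind_apply]; split <;> norm_num

include hQ

lemma Qzero : Q 0 = 0 := by
  have := hQ.2.2.1 0 le_rfl 0
  simpa using this

lemma Qsum {ι : Type*} (s : Finset ι) (F : ι → X → ℝ) :
    ∑ i ∈ s, Q (F i) ≤ Q (∑ i ∈ s, F i) := by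
  classical
  induction s using Finset.induction_on with
  | empty => simp [Qzero hQ]
  | insert _ _ h ih =>
    rw [Finset.sum_insert h, Finset.sum_insert h]
    calc Q (F _) + ∑ i ∈ _, Q (F i) ≤ Q (F _) + Q (∑ i ∈ _, F i) := by
          exact add_le_add_right ih _
      _ ≤ _ := hQ.2.1 _ _

lemma Qnonneg_of_zero_at {h : X → ℝ} {x : X} (hh : ∀ z, 0 ≤ h z) (hx : h x = 0) :
    0 ≤ Q h x := by
  classical
  have hdecomp : h = ∑ y : X, h y • ind {y} := by
    funext z
    simp only [Finset.sum_apply, Pi.smul_apply, smul_eq_mul, ind_apply]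
    rw [Finset.sum_eq_single z]
    · simp
    · intro b _ hb
      rw [if_neg (by simpa using Ne.symm hb)]; ring
    · simp
  have h1 : ∑ y : X, Q (h y • ind {y}) ≤ Q h := by
    conv_rhs => rw [hdecomp]
    exact Qsum hQ _ _
  have h2 : ∀ y : X, 0 ≤ Q (h y • ind {y}) x := by
    intro y
    rw [hQ.2.2.1 (h y) (hh y)]
    simp only [Pi.smul_apply, smul_eq_mul]
    rcases eq_or_ne x y with rfl | hxy
    · rw [hx]; simp
    · exact mul_nonneg (hh y) (hQ.2.2.2 x y hxy)
  calc (0:ℝ) ≤ ∑ y : X, Q (h y • ind {y}) x := Finset.sum_nonneg fun y _ => h2 y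
    _ ≤ Q h x := by simpa using h1 x

lemma Qmono_at {f φ : X → ℝ} {x : X} (hle : ∀ z, f z ≤ φ z) (hx : f x = φ x) :
    Q f x ≤ Q φ x := by
  have key : Q f x + Q (φ - f) x ≤ Q φ x := by
    have := hQ.2.1 f (φ - f)
    simpa using this x
  have h0 : 0 ≤ Q (φ - f) x :=
    Qnonneg_of_zero_at hQ (fun z => by simp [sub_nonneg, hle z]) (by simp [hx])
  linarith

lemma Qmax_le {f : X → ℝ} {x : X} (hmax : ∀ z, f z ≤ f x) : Q f x ≤ 0 := by
  have := Qmono_at hQ (f := f) (φ := fun _ => f x) hmax rfl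
  rwa [hQ.1 (f x)] at this

lemma Qmin_ge {f : X → ℝ} {x : X} (hmin : ∀ z, f x ≤ f z) : 0 ≤ Q f x := by
  have := Qmono_at hQ (f := fun _ => f x) (φ := f) hmin rfl
  rwa [hQ.1 (f x)] at this

lemma Qconst_add (μ : ℝ) (f : X → ℝ) : Q ((fun _ => μ) + f) = Q f := by
  apply le_antisymm
  · have h := hQ.2.1 ((fun _ => μ) + f) (fun _ => -μ)
    have heq : ((fun _ : X => μ) + f) + (fun _ => -μ) = f := by funext z; simp
    rw [heq, hQ.1 (-μ)] at h
    simpa using h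
  · have h := hQ.2.1 (fun _ => μ) f
    rw [hQ.1 μ] at h
    simpa using h

lemma Qdiag {y : X} : Q (ind {y}) y ≤ 0 := by
  refine Qmax_le hQ fun z => ?_
  rw [ind_apply, ind_apply]
  simp only [Set.mem_singleton_iff, if_pos rfl]
  split <;> norm_num

lemma QlowerBound {S : Set X} {y : X} (hy : y ∉ S) {δ : ℝ} (hδ : 0 ≤ δ) {f : X → ℝ}
    (hf0 : ∀ z, 0 ≤ f z) (hfS : ∀ z ∈ S, δ ≤ f z) :
    δ * Q (ind S) y + f y * Q (ind {y}) y ≤ Q f y := by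
  set φ : X → ℝ := δ • ind S + f y • ind {y} with hφdef
  have hle : ∀ z, φ z ≤ f z := by
    intro z
    simp only [hφdef, Pi.add_apply, Pi.smul_apply, smul_eq_mul, ind_apply]
    by_cases hzS : z ∈ S
    · have hzy : z ≠ y := fun h => hy (h ▸ hzS)
      rw [if_pos hzS, if_neg (by simpa using hzy)]
      have := hfS z hzS
      simp; linarith
    · rw [if_neg hzS]
      by_cases hzy : z = y
      · subst hzy; simp
      · rw [if_neg (by simpa using hzy)]
        simpa using hf0 z
  have hxeq : φ y = f y := by
    simp only [hφdef, Pi.add_apply, Pi.smul_apply, smul_eq_mul, ind_apply]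
    rw [if_neg hy]
    simp
  have h1 : Q φ y ≤ Q f y := Qmono_at hQ hle hxeq
  have h2 : Q (δ • ind S) y + Q (f y • ind {y}) y ≤ Q φ y := by
    have := hQ.2.1 (δ • ind S) (f y • ind {y})
    simpa using this y
  rw [hQ.2.2.1 δ hδ, hQ.2.2.1 (f y) (hf0 y)] at h2
  simp only [Pi.smul_apply, smul_eq_mul] at h2
  linarith

lemma ind_empty : ind (∅ : Set X) = 0 := by
  funext z; rw [ind_apply]; simp

end basics

/-- Barrier / first-crossing lemma. -/
lemma barrier_le {X : Type*} [Fintype X] {C : Set X} (g D : ℝ → X → ℝ)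
    (hg : ∀ t, 0 ≤ t → ∀ x, HasDerivWithinAt (fun s => g s x) (D t x) (Ici 0) t)
    (hD : ∀ t, 0 ≤ t → ∀ x ∈ C, (∀ z ∈ C, g t z ≤ g t x) → D t x ≤ 0)
    (M : ℝ) (h0 : ∀ x ∈ C, g 0 x ≤ M) :
    ∀ t, 0 ≤ t → ∀ x ∈ C, g t x ≤ M := by
  have hcont : ∀ x : X, ContinuousOn (fun s => g s x) (Ici 0) :=
    fun x t ht => (hg t ht x).continuousWithinAt
  intro t ht x hx
  suffices H : ∀ ε > (0:ℝ), g t x < M + ε * Real.exp t by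
    by_contra hcon
    push_neg at hcon
    have hε : 0 < (g t x - M) / Real.exp t := by
      apply div_pos (by linarith) (Real.exp_pos t)
    have := H _ hε
    rw [div_mul_cancel₀ _ (Real.exp_pos t).ne'] at this
    linarith
  intro ε hε
  by_contra hbad
  push_neg at hbad
  set S : Set ℝ := {s | s ∈ Icc 0 t ∧ ∃ z ∈ C, M + ε * Real.exp s ≤ g s z} with hSdef
  have hSne : S.Nonempty := ⟨t, ⟨ht, le_rfl⟩, x, hx, hbad⟩
  have hScl : IsClosed S := by
    have : S = ⋃ z ∈ C, (Icc 0 t ∩ (fun s => g s z - (M + ε * Real.exp s)) ⁻¹' Ici 0) := by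
      ext s
      simp only [hSdef, mem_setOf_eq, mem_iUnion, mem_inter_iff, mem_preimage, mem_Ici,
        sub_nonneg, exists_prop]
      tauto
    rw [this]
    refine (Set.toFinite C).isClosed_biUnion fun z _ => ?_
    refine ContinuousOn.preimage_isClosed_of_isClosed ?_ isClosed_Icc isClosed_Ici
    exact ((hcont z).mono (Icc_subset_Ici_self)).sub
      (Continuous.continuousOn (by continuity))
  have hbb : BddBelow S := ⟨0, fun s hs => hs.1.1⟩
  set τ := sInf S with hτdef
  have hτS : τ ∈ S := hScl.csInf_mem hSne hbb
  obtain ⟨⟨hτ0, hτt⟩, w, hwC, hw⟩ := hτS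
  have hτpos : 0 < τ := by
    rcases lt_or_eq_of_le hτ0 with h | h
    · exact h
    · exfalso
      rw [← h] at hw
      simp only [Real.exp_zero, mul_one] at hw
      have := h0 w hwC
      linarith
  have hlt : ∀ s, 0 ≤ s → s < τ → ∀ z ∈ C, g s z < M + ε * Real.exp s := by
    intro s hs0 hsτ z hz
    by_contra hc
    push_neg at hc
    have hsS : s ∈ S := ⟨⟨hs0, hsτ.le.trans hτt⟩, z, hz, hc⟩
    exact absurd (csInf_le hbb hsS) (not_le.2 hsτ)
  have hne : (𝓝[Ico 0 τ] τ).NeBot := by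
    rw [nhdsWithin_Ico_eq_nhdsLT hτpos]
    infer_instance
  have hle : ∀ z ∈ C, g τ z ≤ M + ε * Real.exp τ := by
    intro z hz
    have hcw : ContinuousWithinAt (fun s => g s z - (M + ε * Real.exp s)) (Ico 0 τ) τ := by
      apply ContinuousWithinAt.sub
      · exact ((hcont z) τ hτ0).mono (Ico_subset_Ici_self)
      · exact (Continuous.continuousAt (by continuity)).continuousWithinAt
    have hev : ∀ᶠ s in 𝓝[Ico 0 τ] τ, g s z - (M + ε * Real.exp s) ≤ 0 := by
      filter_upwards [eventually_mem_nhdsWithin] with s hs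
      exact sub_nonpos.2 (hlt s hs.1 hs.2 z hz).le
    have h5 : g τ z - (M + ε * Real.exp τ) ≤ 0 := le_of_tendsto hcw hev
    linarith
  have heq : g τ w = M + ε * Real.exp τ := le_antisymm (hle w hwC) hw
  have hmax : ∀ z ∈ C, g τ z ≤ g τ w := fun z hz => (hle z hz).trans heq.ge
  have hD0 : D τ w ≤ 0 := hD τ hτ0 w hwC hmax
  set φ : ℝ → ℝ := fun s => g s w - (M + ε * Real.exp s) with hφdef
  have hBd : HasDerivAt (fun s : ℝ => M + ε * Real.exp s) (ε * Real.exp τ) τ :=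
    ((Real.hasDerivAt_exp τ).const_mul ε).const_add M
  have hφd : HasDerivWithinAt φ (D τ w - ε * Real.exp τ) (Ici 0) τ :=
    (hg τ hτ0 w).sub hBd.hasDerivWithinAt
  have hdneg : D τ w - ε * Real.exp τ < 0 := by
    have := mul_pos hε (Real.exp_pos τ); linarith
  rw [hasDerivWithinAt_iff_tendsto_slope] at hφd
  have h2 : Tendsto (slope φ τ) (𝓝[Ico 0 τ] τ) (𝓝 (D τ w - ε * Real.exp τ)) :=
    hφd.mono_left (nhdsWithin_mono τ (fun s hs => ⟨hs.1, ne_of_lt hs.2⟩))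
  have h3 : ∀ᶠ s in 𝓝[Ico 0 τ] τ, slope φ τ s < 0 := h2.eventually (eventually_lt_nhds hdneg)
  obtain ⟨s, hslope, hsIco⟩ := (h3.and eventually_mem_nhdsWithin).exists
  have hφs : φ s < 0 := sub_neg.2 (hlt s hsIco.1 hsIco.2 w hwC)
  have hφτ : φ τ = 0 := by simp [hφdef, heq]
  rw [slope_def_field, hφτ, sub_zero] at hslope
  have hst : s - τ < 0 := sub_neg.2 hsIco.2
  have : 0 < φ s / (s - τ) := div_pos_of_neg_of_neg hφs hst
  linarith

/-- Scalar lower Gronwall-type bound on an interval. -/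
lemma gron_ge {φ dφ : ℝ → ℝ} {a b : ℝ} (hab : a ≤ b)
    (hcont : ContinuousOn φ (Icc a b))
    (hd : ∀ s ∈ Ico a b, HasDerivWithinAt φ (dφ s) (Ici s) s)
    {r : ℝ} (hbound : ∀ s ∈ Ico a b, r ≤ dφ s) :
    φ a + r * (b - a) ≤ φ b := by
  have key := image_le_of_deriv_right_le_deriv_boundary
    (f := fun s => -φ s) (f' := fun s => -dφ s) (a := a) (b := b)
    hcont.neg (fun s hs => (hd s hs).neg)
    (B := fun s => -φ a - r * (s - a)) (B' := fun _ => -r)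
    (by simp)
    (Continuous.continuousOn (by continuity))
    (fun s _ => ((((hasDerivAt_id s).sub_const a).const_mul r).const_sub (-φ a)).hasDerivWithinAt.congr_deriv (by ring))
    (fun s hs => by have := hbound s hs; show -dφ s ≤ -r; linarith)
  have hb := key (right_mem_Icc.2 hab)
  linarith


section main
variable {X : Type*} [Fintype X] [Nonempty X]
  {Q : (X → ℝ) → (X → ℝ)} (hQ : IsLTRO Q)
  {T : ℝ → (X → ℝ) → (X → ℝ)} (hT : IsSol Q T) (A : Set X)

include hT in
lemma hasDeriv_coord (f : X → ℝ) (x : X) {t : ℝ} (ht : 0 ≤ t) :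
    HasDerivWithinAt (fun s => T s f x) (Q (T t f) x) (Ici 0) t :=
  hasDerivWithinAt_pi.1 (hT.2 f t ht) x

include hQ hT

/-- global bounds: 0 ≤ T_t 1_A ≤ 1 -/
lemma Tbound : ∀ t, 0 ≤ t → ∀ x, 0 ≤ T t (ind A) x ∧ T t (ind A) x ≤ 1 := by
  have hub := barrier_le (C := (univ : Set X)) (fun t => T t (ind A)) (fun t => Q (T t (ind A)))
    (fun t ht x => hasDeriv_coord hT (ind A) x ht)
    (fun t ht x _ hmax => Qmax_le hQ (fun z => hmax z (mem_univ z)))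
    1 (fun x _ => by show T 0 (ind A) x ≤ 1; rw [hT.1]; exact ind_le_one x)
  have hlb := barrier_le (C := (univ : Set X)) (fun t x => -(T t (ind A) x))
    (fun t x => -(Q (T t (ind A)) x))
    (fun t ht x => (hasDeriv_coord hT (ind A) x ht).neg)
    (fun t ht x _ hmax => by
      show -(Q (T t (ind A)) x) ≤ 0
      have h1 : 0 ≤ Q (T t (ind A)) x :=
        Qmin_ge hQ (fun z => by
          have h5 : -(T t (ind A) z) ≤ -(T t (ind A) x) := hmax z (mem_univ z)
          linarith)
      linarith)
    0 (fun x _ => by show -(T 0 (ind A) x) ≤ 0; rw [hT.1]; simpa using ind_nonneg x)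
  intro t ht x
  have h6 : T t (ind A) x ≤ 1 := hub t ht x (mem_univ x)
  have h7 : -(T t (ind A) x) ≤ 0 := hlb t ht x (mem_univ x)
  exact ⟨by linarith, h6⟩

/-- positivity is propagated forward in time -/
lemma posMono {y : X} {a b : ℝ} (ha : 0 ≤ a) (hab : a ≤ b)
    (hpos : 0 < T a (ind A) y) : 0 < T b (ind A) y := by
  set c : ℝ := -(Q (ind {y}) y) with hcdef
  have hc0 : 0 ≤ c := by have := Qdiag hQ (y := y); linarith
  set ψ : ℝ → ℝ := fun s => Real.exp (c * s) * T s (ind A) y with hψdef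
  have hψd : ∀ s ∈ Ico a b, HasDerivWithinAt ψ
      (Real.exp (c * s) * c * T s (ind A) y + Real.exp (c * s) * Q (T s (ind A)) y) (Ici s) s := by
    intro s hs
    have h1 : HasDerivAt (fun u : ℝ => Real.exp (c * u)) (Real.exp (c * s) * c) s :=
      (Real.hasDerivAt_exp (c * s)).comp s ((hasDerivAt_id s).const_mul c) |>.congr_deriv (by ring)
    have h2 : HasDerivWithinAt (fun u => T u (ind A) y) (Q (T s (ind A)) y) (Ici s) s :=
      (hasDeriv_coord hT (ind A) y (ha.trans hs.1)).mono (Ici_subset_Ici.2 (ha.trans hs.1))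
    exact h1.hasDerivWithinAt.mul h2
  have hψcont : ContinuousOn ψ (Icc a b) := by
    apply ContinuousOn.mul
    · exact Continuous.continuousOn (by continuity)
    · exact fun s hs => ((hasDeriv_coord hT (ind A) y (ha.trans hs.1)).continuousWithinAt).mono
        (fun u hu => ha.trans hu.1)
  have hbound : ∀ s ∈ Ico a b, (0:ℝ) ≤
      Real.exp (c * s) * c * T s (ind A) y + Real.exp (c * s) * Q (T s (ind A)) y := by
    intro s hs
    have hs0 : 0 ≤ s := ha.trans hs.1
    have hg0 : ∀ z, 0 ≤ T s (ind A) z := fun z => (Tbound hQ hT A s hs0 z).1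
    have hQb : T s (ind A) y * Q (ind {y}) y ≤ Q (T s (ind A)) y := by
      have := QlowerBound hQ (S := (∅ : Set X)) (y := y) (notMem_empty y) le_rfl hg0
        (fun z hz => absurd hz (notMem_empty z))
      rwa [ind_empty hQ, Qzero hQ, Pi.zero_apply, mul_zero, zero_add] at this
    have hexp : 0 < Real.exp (c * s) := Real.exp_pos _
    have : -(c * T s (ind A) y) ≤ Q (T s (ind A)) y := by
      have := hQb; rw [hcdef] at *; nlinarith [hg0 y]
    nlinarith
  have hgron := gron_ge hab hψcont hψd hbound
  have h6 : Real.exp (c * a) * T a (ind A) y + 0 * (b - a)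
      ≤ Real.exp (c * b) * T b (ind A) y := hgron
  have hψa : 0 < Real.exp (c * a) * T a (ind A) y := mul_pos (Real.exp_pos _) hpos
  by_contra hcon
  push_neg at hcon
  have : Real.exp (c * b) * T b (ind A) y ≤ 0 :=
    mul_nonpos_of_nonneg_of_nonpos (Real.exp_pos _).le hcon
  linarith

/-- positivity propagates across one lowerStep -/
lemma posStep {S : Set X} {y : X} (hy : y ∉ S) (hq : 0 < Q (ind S) y)
    {a b : ℝ} (ha : 0 < a) (hab : a < b)
    (hSpos : ∀ z ∈ S, ∀ s ∈ Icc a b, 0 < T s (ind A) z) :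
    0 < T b (ind A) y := by
  -- S is nonempty
  have hSne : S.Nonempty := by
    by_contra h
    rw [not_nonempty_iff_eq_empty] at h
    subst h
    rw [ind_empty hQ, Qzero hQ] at hq
    simp at hq
  -- uniform positive lower bound δ on S × [a,b]
  have h1 : ∀ z : X, ∃ mz : ℝ, 0 < mz ∧ (z ∈ S → ∀ s ∈ Icc a b, mz ≤ T s (ind A) z) := by
    intro z
    by_cases hz : z ∈ S
    · have hcont : ContinuousOn (fun s => T s (ind A) z) (Icc a b) := fun s hs =>
        ((hasDeriv_coord hT (ind A) z (ha.le.trans hs.1)).continuousWithinAt).mono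
          (fun u hu => ha.le.trans hu.1)
      obtain ⟨s0, hs0, hmin⟩ := isCompact_Icc.exists_isMinOn (nonempty_Icc.2 hab.le) hcont
      exact ⟨T s0 (ind A) z, hSpos z hz s0 hs0, fun _ s hs => hmin hs⟩
    · exact ⟨1, one_pos, fun h => absurd h hz⟩
  choose m hm1 hm2 using h1
  have hFne : (Set.toFinite S).toFinset.Nonempty := by
    rwa [Set.Finite.toFinset_nonempty]
  set δ : ℝ := (Set.toFinite S).toFinset.inf' hFne m with hδdef
  have hδ0 : 0 < δ := by
    rw [hδdef, Finset.lt_inf'_iff]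
    exact fun z _ => hm1 z
  have hδS : ∀ z ∈ S, ∀ s ∈ Icc a b, δ ≤ T s (ind A) z := by
    intro z hz s hs
    calc δ ≤ m z := Finset.inf'_le m (by rwa [Set.Finite.mem_toFinset])
      _ ≤ T s (ind A) z := hm2 z hz s hs
  -- Gronwall with positive drift
  set c : ℝ := -(Q (ind {y}) y) with hcdef
  have hc0 : 0 ≤ c := by have := Qdiag hQ (y := y); linarith
  set r : ℝ := δ * Q (ind S) y * Real.exp (c * a) with hrdef
  have hr0 : 0 < r := by
    apply mul_pos (mul_pos hδ0 hq) (Real.exp_pos _)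
  set ψ : ℝ → ℝ := fun s => Real.exp (c * s) * T s (ind A) y with hψdef
  have hψd : ∀ s ∈ Ico a b, HasDerivWithinAt ψ
      (Real.exp (c * s) * c * T s (ind A) y + Real.exp (c * s) * Q (T s (ind A)) y) (Ici s) s := by
    intro s hs
    have h1 : HasDerivAt (fun u : ℝ => Real.exp (c * u)) (Real.exp (c * s) * c) s :=
      (Real.hasDerivAt_exp (c * s)).comp s ((hasDerivAt_id s).const_mul c) |>.congr_deriv (by ring)
    have h2 : HasDerivWithinAt (fun u => T u (ind A) y) (Q (T s (ind A)) y) (Ici s) s :=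
      (hasDeriv_coord hT (ind A) y (ha.le.trans hs.1)).mono (Ici_subset_Ici.2 (ha.le.trans hs.1))
    exact h1.hasDerivWithinAt.mul h2
  have hψcont : ContinuousOn ψ (Icc a b) := by
    apply ContinuousOn.mul
    · exact Continuous.continuousOn (by continuity)
    · exact fun s hs => ((hasDeriv_coord hT (ind A) y (ha.le.trans hs.1)).continuousWithinAt).mono
        (fun u hu => ha.le.trans hu.1)
  have hbound : ∀ s ∈ Ico a b, r ≤
      Real.exp (c * s) * c * T s (ind A) y + Real.exp (c * s) * Q (T s (ind A)) y := by
    intro s hs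
    have hs0 : 0 ≤ s := ha.le.trans hs.1
    have hg0 : ∀ z, 0 ≤ T s (ind A) z := fun z => (Tbound hQ hT A s hs0 z).1
    have hQb : δ * Q (ind S) y + T s (ind A) y * Q (ind {y}) y ≤ Q (T s (ind A)) y :=
      QlowerBound hQ hy hδ0.le hg0 (fun z hz => hδS z hz s ⟨hs.1, hs.2.le⟩)
    have hexp : 0 < Real.exp (c * s) := Real.exp_pos _
    have hexpm : Real.exp (c * a) ≤ Real.exp (c * s) :=
      Real.exp_le_exp.2 (mul_le_mul_of_nonneg_left hs.1 hc0)
    have key : c * T s (ind A) y + Q (T s (ind A)) y ≥ δ * Q (ind S) y := by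
      rw [hcdef] at *; nlinarith [hg0 y]
    calc r = δ * Q (ind S) y * Real.exp (c * a) := hrdef
      _ ≤ δ * Q (ind S) y * Real.exp (c * s) := by
          apply mul_le_mul_of_nonneg_left hexpm (mul_pos hδ0 hq).le
      _ ≤ (c * T s (ind A) y + Q (T s (ind A)) y) * Real.exp (c * s) := by
          apply mul_le_mul_of_nonneg_right key hexp.le
      _ = Real.exp (c * s) * c * T s (ind A) y + Real.exp (c * s) * Q (T s (ind A)) y := by ring
  have hgron := gron_ge hab.le hψcont hψd hbound
  have h6 : Real.exp (c * a) * T a (ind A) y + r * (b - a)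
      ≤ Real.exp (c * b) * T b (ind A) y := hgron
  have hψa : 0 ≤ Real.exp (c * a) * T a (ind A) y :=
    mul_nonneg (Real.exp_pos _).le (Tbound hQ hT A a ha.le y).1
  have hrb : 0 < r * (b - a) := mul_pos hr0 (by linarith)
  by_contra hcon
  push_neg at hcon
  have : Real.exp (c * b) * T b (ind A) y ≤ 0 :=
    mul_nonpos_of_nonneg_of_nonpos (Real.exp_pos _).le hcon
  linarith

/-- everything in the k-th lower step is strictly positive at positive times -/
lemma posIter : ∀ k : ℕ, ∀ y ∈ (lowerStep Q)^[k] A, ∀ t : ℝ, 0 < t → 0 < T t (ind A) y := by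
  intro k
  induction k with
  | zero =>
    intro y hy t ht
    simp only [Function.iterate_zero, id] at hy
    have h0 : 0 < T 0 (ind A) y := by
      rw [hT.1, ind_apply, if_pos hy]; norm_num
    exact posMono hQ hT A le_rfl ht.le h0
  | succ k ih =>
    intro y hy t ht
    rw [Function.iterate_succ_apply'] at hy
    rcases hy with hy | ⟨hyn, hq⟩
    · exact ih y hy t ht
    · refine posStep hQ hT A hyn hq (half_pos ht) (half_lt_self ht) ?_
      intro z hz s hs
      exact ih z hz s (lt_of_lt_of_le (half_pos ht) hs.1)

/-- decay outside a fixed point of lowerStep -/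
lemma zeroOutside {B : Set X} (hfix : lowerStep Q B = B) (hAB : A ⊆ B) :
    ∀ t, 0 ≤ t → ∀ x, x ∉ B → T t (ind A) x ≤ 0 := by
  intro t ht x hxB
  refine barrier_le (C := Bᶜ) (fun t => T t (ind A)) (fun t => Q (T t (ind A)))
    (fun t ht x => hasDeriv_coord hT (ind A) x ht)
    ?_ 0 (fun z hz => by
      show T 0 (ind A) z ≤ 0
      rw [hT.1, ind_apply, if_neg (fun h => hz (hAB h))])
    t ht x hxB
  intro s hs w hwB hmax
  show Q (T s (ind A)) w ≤ 0
  set g : X → ℝ := T s (ind A) with hgdef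
  have hg0 : ∀ z, 0 ≤ g z := fun z => (Tbound hQ hT A s hs z).1
  have hg1 : ∀ z, g z ≤ 1 := fun z => (Tbound hQ hT A s hs z).2
  set cc : ℝ := g w with hccdef
  set φ : X → ℝ := (fun _ => cc) + (1 - cc) • ind B with hφdef
  have hle : ∀ z, g z ≤ φ z := by
    intro z
    simp only [hφdef, Pi.add_apply, Pi.smul_apply, smul_eq_mul, ind_apply]
    by_cases hzB : z ∈ B
    · rw [if_pos hzB]; have := hg1 z; linarith
    · rw [if_neg hzB]
      have h9 : T s (ind A) z ≤ T s (ind A) w := hmax z hzB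
      simp only [hgdef, hccdef]
      linarith
  have heq : g w = φ w := by
    simp only [hφdef, Pi.add_apply, Pi.smul_apply, smul_eq_mul, ind_apply]
    rw [if_neg hwB]; simp [hccdef]
  have h1 : Q g w ≤ Q φ w := Qmono_at hQ hle heq
  have h2 : Q φ = (1 - cc) • Q (ind B) := by
    rw [hφdef, Qconst_add hQ, hQ.2.2.1 (1 - cc) (by have := hg1 w; simp only [hccdef]; linarith)]
  have h3 : Q (ind B) w ≤ 0 := by
    by_contra h
    push_neg at h
    have : w ∈ lowerStep Q B := Or.inr ⟨hwB, h⟩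
    rw [hfix] at this
    exact hwB this
  have h4 : Q φ w ≤ 0 := by
    rw [h2]
    simp only [Pi.smul_apply, smul_eq_mul]
    have hcc1 : cc ≤ 1 := hg1 w
    nlinarith
  linarith

end main

section combinatorics
variable {X : Type*} [Fintype X] {Q : (X → ℝ) → (X → ℝ)}

lemma lowerStep_subset (S : Set X) : S ⊆ lowerStep Q S := subset_union_left

lemma iter_subset (A : Set X) : ∀ n : ℕ, A ⊆ (lowerStep Q)^[n] A := by
  intro n
  induction n with
  | zero => simp
  | succ n ih =>
    rw [Function.iterate_succ_apply']
    exact ih.trans (lowerStep_subset _)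

lemma exists_fixed (A : Set X) : ∃ n : ℕ, (lowerStep Q)^[n] A = (lowerStep Q)^[n+1] A := by
  by_contra h
  push_neg at h
  have hmono : ∀ n : ℕ, (lowerStep Q)^[n] A ⊂ (lowerStep Q)^[n+1] A := by
    intro n
    refine ssubset_of_subset_of_ne ?_ (h n)
    rw [Function.iterate_succ_apply']
    exact lowerStep_subset _
  have hcard : ∀ n : ℕ, n ≤ ((lowerStep Q)^[n] A).ncard := by
    intro n
    induction n with
    | zero => exact Nat.zero_le _
    | succ n ih =>
      have := Set.ncard_lt_ncard (hmono n) (Set.toFinite _)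
      omega
  have h1 := hcard (Fintype.card X + 1)
  have h2 : ((lowerStep Q)^[Fintype.card X + 1] A).ncard ≤ Fintype.card X := by
    have h3 : ((lowerStep Q)^[Fintype.card X + 1] A).ncard ≤ (univ : Set X).ncard :=
      Set.ncard_le_ncard (subset_univ _) (Set.toFinite _)
    rwa [Set.ncard_univ, Nat.card_eq_fintype_card] at h3
  omega

end combinatorics


end Aux

section Final
open Set Classical

/-- For any `t > 0`, state `x` and set `A`: `T_t 𝟙_A (x) > 0` iff `A` is lower
reachable from `x`. -/
theorem stmt4 {X : Type*} [Fintype X] [Nonempty X]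
    (Q : (X → ℝ) → (X → ℝ)) (hQ : IsLTRO Q)
    (T : ℝ → (X → ℝ) → (X → ℝ)) (hT : IsSol Q T)
    (t : ℝ) (ht : 0 < t) (x : X) (A : Set X) :
    0 < T t (ind A) x ↔ lowerReach Q x A := by
  constructor
  · intro hpos
    by_contra hnr
    obtain ⟨n, hfixn⟩ := exists_fixed (Q := Q) A
    have hxn : x ∉ (lowerStep Q)^[n] A := fun hx => hnr ⟨n, hfixn, hx⟩
    have hfix : lowerStep Q ((lowerStep Q)^[n] A) = (lowerStep Q)^[n] A := by
      conv_rhs => rw [hfixn]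
      rw [Function.iterate_succ_apply']
    have := zeroOutside hQ hT A hfix (iter_subset A n) t ht.le x hxn
    linarith
  · rintro ⟨n, -, hx⟩
    exact posIter hQ hT A n x hx t ht

end Final
end
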